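/- For every t ∈ ℝ and every λ ∈ ℂ, one has det(λI − φ⁺(t)) = 0 if and only if det(λ M_{−∞} − M_t) = 0, where M_t = ∫_t^∞ e^{−s²} S(s)[S(s)]^T ds and M_{−∞} = ∫_{−∞}^{∞} e^{−s²} S(s)[S(s)]^T ds with S(s) = (1, s, …, s^{n−1})^T. -/

import Mathlib

open MeasureTheory Filter Topology Matrix

noncomputable section

/-- The physicists' Hermite polynomial `H_m(y) = (−1)^m e^{y²} (d/dy)^m e^{−y²}`. -/
def hermiteH (m : ℕ) (y : ℝ) : ℝ :=
  (-1 : ℝ) ^ m * Real.exp (y ^ 2) * iteratedDeriv m (fun x => Real.exp (-x ^ 2)) y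

/-- The Hermite function `h_m(y) = (2^m m! √π)^{−1/2} H_m(y) e^{−y²/2}`. -/
def hermiteFun (m : ℕ) (y : ℝ) : ℝ :=
  (Real.sqrt (2 ^ m * m.factorial * Real.sqrt Real.pi))⁻¹ * hermiteH m y *
    Real.exp (-y ^ 2 / 2)

/-- The matrix `H(y)[H(y)]ᵀ`, where `H(y) = (h_0(y), …, h_{n−1}(y))ᵀ`. -/
def HHT (n : ℕ) (y : ℝ) : Matrix (Fin n) (Fin n) ℝ :=
  Matrix.of fun j k : Fin n => hermiteFun j y * hermiteFun k y


/-- `φ⁺(t) = ∫_t^∞ H(s)[H(s)]ᵀ ds`. -/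
def phiPlus (n : ℕ) (t : ℝ) : Matrix (Fin n) (Fin n) ℝ :=
  Matrix.of fun j k : Fin n => ∫ s in Set.Ioi t, hermiteFun j s * hermiteFun k s

/-- `M_t = ∫_t^∞ e^{−s²} S(s)[S(s)]ᵀ ds` with `S(s) = (1, s, …, s^{n−1})ᵀ`. -/
def Mmat (n : ℕ) (t : ℝ) : Matrix (Fin n) (Fin n) ℝ :=
  Matrix.of fun j k : Fin n =>
    ∫ s in Set.Ioi t, Real.exp (-s ^ 2) * (s ^ (j : ℕ) * s ^ (k : ℕ))

/-- `M_{−∞} = ∫_ℝ e^{−s²} S(s)[S(s)]ᵀ ds`. -/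
def MmatBot (n : ℕ) : Matrix (Fin n) (Fin n) ℝ :=
  Matrix.of fun j k : Fin n => ∫ s : ℝ, Real.exp (-s ^ 2) * (s ^ (j : ℕ) * s ^ (k : ℕ))


namespace S
open Polynomial Real


/-- scaled Hermite polynomial: `Pm m` evaluates to physicists' `H_m`. -/
def Pm (m : ℕ) : Polynomial ℝ :=
  ∑ k ∈ Finset.range (m + 1),
    C (Real.sqrt 2 ^ (m + k) * ((Polynomial.hermite m).coeff k : ℝ)) * X ^ k

lemma coeff_Pm (m k : ℕ) : (Pm m).coeff k =
    if k ≤ m then Real.sqrt 2 ^ (m + k) * ((Polynomial.hermite m).coeff k : ℝ) else 0 := by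
  rw [Pm, Polynomial.finset_sum_coeff]
  simp only [Polynomial.coeff_C_mul, Polynomial.coeff_X_pow, mul_ite, mul_one, mul_zero]
  simp only [eq_comm (a := k)]
  rw [Finset.sum_ite_eq' (Finset.range (m + 1)) k]
  simp [Nat.lt_succ_iff]

lemma coeff_Pm_self (m : ℕ) : (Pm m).coeff m = 2 ^ m := by
  rw [coeff_Pm, if_pos le_rfl, Polynomial.coeff_hermite_self]
  push_cast
  rw [mul_one, ← two_mul, pow_mul, Real.sq_sqrt (by norm_num : (0:ℝ) ≤ 2)]

lemma coeff_Pm_of_lt {m k : ℕ} (h : m < k) : (Pm m).coeff k = 0 := by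
  rw [coeff_Pm, if_neg (by omega)]

lemma natDegree_Pm_le (m : ℕ) : (Pm m).natDegree ≤ m :=
  Polynomial.natDegree_le_iff_coeff_eq_zero.2 fun _ h => coeff_Pm_of_lt h

lemma eval_Pm (m : ℕ) (y : ℝ) :
    (Pm m).eval y = Real.sqrt 2 ^ m * (Polynomial.aeval (Real.sqrt 2 * y)) (Polynomial.hermite m) := by
  have h1 : (Polynomial.aeval (Real.sqrt 2 * y)) (Polynomial.hermite m)
      = ((Polynomial.hermite m).map (Int.castRingHom ℝ)).eval (Real.sqrt 2 * y) := by
    rw [Polynomial.eval_map, Polynomial.aeval_def]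
    rfl
  have hd : ((Polynomial.hermite m).map (Int.castRingHom ℝ)).natDegree < m + 1 :=
    lt_of_le_of_lt Polynomial.natDegree_map_le (by simp [Polynomial.natDegree_hermite])
  rw [h1, Polynomial.eval_eq_sum_range' hd, Pm, Polynomial.eval_finset_sum, Finset.mul_sum]
  refine Finset.sum_congr rfl fun k _ => ?_
  simp only [Polynomial.eval_mul, Polynomial.eval_C, Polynomial.eval_pow, Polynomial.eval_X,
    Polynomial.coeff_map, mul_pow, pow_add, eq_intCast, Int.cast_id]
  ring





lemma gauss_contDiff : ContDiff ℝ ⊤ (fun u : ℝ => Real.exp (-(u ^ 2 / 2))) := by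
  apply ContDiff.exp
  exact ((contDiff_id.pow 2).div_const 2).neg

lemma gauss2_contDiff : ContDiff ℝ ⊤ (fun x : ℝ => Real.exp (-x ^ 2)) := by
  apply ContDiff.exp
  exact (contDiff_id.pow 2).neg

lemma iteratedDeriv_gauss (m : ℕ) (y : ℝ) :
    iteratedDeriv m (fun x : ℝ => Real.exp (-x ^ 2)) y =
      (-1 : ℝ) ^ m * (Real.sqrt 2 ^ m * (Polynomial.aeval (Real.sqrt 2 * y)) (Polynomial.hermite m))
        * Real.exp (-y ^ 2) := by
  have hfun : (fun x : ℝ => Real.exp (-x ^ 2))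
      = fun x : ℝ => (fun u : ℝ => Real.exp (-(u ^ 2 / 2))) (Real.sqrt 2 * x) := by
    funext x
    simp only []
    congr 1
    rw [mul_pow, Real.sq_sqrt (by norm_num : (0:ℝ) ≤ 2)]
    ring
  rw [hfun, iteratedDeriv_comp_const_mul (gauss_contDiff.of_le le_top) (Real.sqrt 2),
    iteratedDeriv_eq_iterate]
  simp only []
  rw [Polynomial.deriv_gaussian_eq_hermite_mul_gaussian]
  have : (Real.sqrt 2 * y) ^ 2 / 2 = y ^ 2 := by
    rw [mul_pow, Real.sq_sqrt (by norm_num : (0:ℝ) ≤ 2)]; ring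
  rw [this]; ring



lemma integrable_pow_gauss (n : ℕ) :
    Integrable (fun x : ℝ => x ^ n * Real.exp (-x ^ 2)) := by
  have h := integrable_rpow_mul_exp_neg_mul_sq (b := 1) one_pos
    (s := (n : ℝ)) (lt_of_lt_of_le neg_one_lt_zero (Nat.cast_nonneg n))
  simpa [Real.rpow_natCast, neg_one_mul] using h

lemma integrable_poly_gauss (R : Polynomial ℝ) :
    Integrable (fun x : ℝ => R.eval x * Real.exp (-x ^ 2)) := by
  have : (fun x : ℝ => R.eval x * Real.exp (-x ^ 2)) =
      fun x => ∑ i ∈ Finset.range (R.natDegree + 1),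
        R.coeff i * (x ^ i * Real.exp (-x ^ 2)) := by
    funext x
    rw [Polynomial.eval_eq_sum_range, Finset.sum_mul]
    simp [mul_assoc]
  rw [this]
  exact integrable_finset_sum _ fun i _ => (integrable_pow_gauss i).const_mul _

lemma tendsto_pow_gauss_atTop (n : ℕ) :
    Tendsto (fun x : ℝ => x ^ n * Real.exp (-x ^ 2)) atTop (𝓝 0) := by
  have h := rpow_mul_exp_neg_mul_sq_isLittleO_exp_neg (b := 1) one_pos (n : ℝ)
  have h2 : Tendsto (fun x : ℝ => Real.exp (-(1/2) * x)) atTop (𝓝 0) := by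
    apply Real.tendsto_exp_atBot.comp
    apply Tendsto.const_mul_atTop_of_neg (by norm_num)
    exact tendsto_id
  have := h.isBigO.trans_tendsto h2
  simpa [Real.rpow_natCast, neg_one_mul] using this

lemma tendsto_poly_gauss_atTop (R : Polynomial ℝ) :
    Tendsto (fun x : ℝ => R.eval x * Real.exp (-x ^ 2)) atTop (𝓝 0) := by
  have : (fun x : ℝ => R.eval x * Real.exp (-x ^ 2)) =
      fun x => ∑ i ∈ Finset.range (R.natDegree + 1),
        R.coeff i * (x ^ i * Real.exp (-x ^ 2)) := by
    funext x
    rw [Polynomial.eval_eq_sum_range, Finset.sum_mul]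
    simp [mul_assoc]
  rw [this]
  have : Tendsto (fun x : ℝ => ∑ i ∈ Finset.range (R.natDegree + 1),
      R.coeff i * (x ^ i * Real.exp (-x ^ 2))) atTop
      (𝓝 (∑ i ∈ Finset.range (R.natDegree + 1), R.coeff i * 0)) :=
    tendsto_finset_sum _ fun i _ => ((tendsto_pow_gauss_atTop i).const_mul _)
  simpa using this

lemma tendsto_poly_gauss_atBot (R : Polynomial ℝ) :
    Tendsto (fun x : ℝ => R.eval x * Real.exp (-x ^ 2)) atBot (𝓝 0) := by
  have key := (tendsto_poly_gauss_atTop (R.comp (-X))).comp tendsto_neg_atBot_atTop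
  have : ((fun x : ℝ => (R.comp (-X)).eval x * Real.exp (-x ^ 2)) ∘ fun x : ℝ => -x)
      = fun x : ℝ => R.eval x * Real.exp (-x ^ 2) := by
    funext x
    simp [Function.comp, Polynomial.eval_comp, neg_sq]
  rwa [this] at key


lemma iteratedDeriv_gauss' (m : ℕ) (y : ℝ) :
    iteratedDeriv m (fun x : ℝ => Real.exp (-x ^ 2)) y =
      (-1 : ℝ) ^ m * (Pm m).eval y * Real.exp (-y ^ 2) := by
  rw [iteratedDeriv_gauss, eval_Pm]

lemma ibp (m : ℕ) (Q : Polynomial ℝ) :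
    ∫ x : ℝ, Q.eval x * iteratedDeriv m (fun x : ℝ => Real.exp (-x ^ 2)) x
      = (-1 : ℝ) ^ m * ∫ x : ℝ, (derivative^[m] Q).eval x * Real.exp (-x ^ 2) := by
  induction m generalizing Q with
  | zero => simp [iteratedDeriv_zero]
  | succ m ih =>
    have hrw : ∀ (P : Polynomial ℝ) (k : ℕ),
        ((fun x => P.eval x) * iteratedDeriv k (fun x : ℝ => Real.exp (-x ^ 2))) =
          fun x : ℝ => ((-1 : ℝ) ^ k • (P * Pm k)).eval x * Real.exp (-x ^ 2) := by
      intro P k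
      funext x
      simp only [Pi.mul_apply, iteratedDeriv_gauss', Polynomial.eval_smul,
        Polynomial.eval_mul, smul_eq_mul]
      ring
    have hdiff : ∀ (k : ℕ) (x : ℝ),
        HasDerivAt (iteratedDeriv k (fun x : ℝ => Real.exp (-x ^ 2)))
          (iteratedDeriv (k + 1) (fun x : ℝ => Real.exp (-x ^ 2)) x) x := by
      intro k x
      rw [iteratedDeriv_succ]
      exact ((gauss2_contDiff.differentiable_iteratedDeriv k (by simp)) x).hasDerivAt
    have h := MeasureTheory.integral_mul_deriv_eq_deriv_mul
      (u := fun x => Q.eval x) (u' := fun x => (derivative Q).eval x)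
      (v := iteratedDeriv m (fun x : ℝ => Real.exp (-x ^ 2)))
      (v' := iteratedDeriv (m + 1) (fun x : ℝ => Real.exp (-x ^ 2)))
      (a' := 0) (b' := 0)
      (fun x _ => Q.hasDerivAt x) (fun x _ => hdiff m x)
      (by rw [hrw Q (m + 1)]; exact integrable_poly_gauss _)
      (by rw [hrw (derivative Q) m]; exact integrable_poly_gauss _)
      (by rw [hrw Q m]; exact tendsto_poly_gauss_atBot _)
      (by rw [hrw Q m]; exact tendsto_poly_gauss_atTop _)
    rw [h, ih (derivative Q)]
    rw [← Function.iterate_succ_apply]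
    ring

lemma ortho_aux {j k : ℕ} (h : j ≤ k) :
    ∫ x : ℝ, (Pm j).eval x * (Pm k).eval x * Real.exp (-x ^ 2)
      = if j = k then 2 ^ j * (j.factorial : ℝ) * Real.sqrt π else 0 := by
  have step1 : ∫ x : ℝ, (Pm j).eval x * (Pm k).eval x * Real.exp (-x ^ 2)
      = (-1 : ℝ) ^ k * ∫ x : ℝ, (Pm j).eval x *
          iteratedDeriv k (fun x : ℝ => Real.exp (-x ^ 2)) x := by
    rw [← MeasureTheory.integral_const_mul]
    congr 1
    funext x
    rw [iteratedDeriv_gauss']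
    ring_nf
    rw [show ((-1 : ℝ)) ^ (k * 2) = 1 by rw [mul_comm, pow_mul]; simp]
    ring
  rw [step1, ibp, ← mul_assoc, ← pow_add, ← two_mul, pow_mul]
  norm_num
  rcases eq_or_lt_of_le h with rfl | hlt
  · rw [if_pos rfl]
    have h0 : (derivative^[j] (Pm j)).natDegree ≤ 0 := by
      refine le_trans (Polynomial.natDegree_iterate_derivative _ _) ?_
      have := natDegree_Pm_le j
      omega
    have hC : derivative^[j] (Pm j) = C ((j.factorial : ℝ) * 2 ^ j) := by
      rw [Polynomial.eq_C_of_natDegree_le_zero h0, Polynomial.coeff_iterate_derivative]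
      norm_num [coeff_Pm_self, Nat.descFactorial_self, nsmul_eq_mul]
    rw [hC]
    simp only [Polynomial.eval_C]
    rw [MeasureTheory.integral_const_mul,
      show (fun a : ℝ => Real.exp (-a ^ 2)) = fun a : ℝ => Real.exp (-1 * a ^ 2) from
        funext fun a => by rw [neg_one_mul]]
    rw [integral_gaussian, div_one]
    ring
  · rw [Polynomial.iterate_derivative_eq_zero ((natDegree_Pm_le j).trans_lt hlt),
      if_neg hlt.ne]
    simp

lemma ortho (j k : ℕ) :
    ∫ x : ℝ, (Pm j).eval x * (Pm k).eval x * Real.exp (-x ^ 2)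
      = if j = k then 2 ^ j * (j.factorial : ℝ) * Real.sqrt π else 0 := by
  rcases le_total j k with h | h
  · exact ortho_aux h
  · have := ortho_aux h
    simp_rw [mul_comm ((Pm k).eval _) ((Pm j).eval _)] at this
    rw [this]
    rcases eq_or_lt_of_le h with rfl | hlt
    · simp
    · rw [if_neg hlt.ne, if_neg hlt.ne']


def cc (m : ℕ) : ℝ := (Real.sqrt (2 ^ m * m.factorial * Real.sqrt Real.pi))⁻¹

lemma hermiteH_eq (m : ℕ) (y : ℝ) : hermiteH m y = (Pm m).eval y := by
  rw [hermiteH, iteratedDeriv_gauss']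
  have h1 : (-1 : ℝ) ^ m * Real.exp (y ^ 2) * ((-1 : ℝ) ^ m * (Pm m).eval y * Real.exp (-y ^ 2))
      = (Pm m).eval y * (((-1 : ℝ) ^ m) ^ 2 * (Real.exp (y ^ 2) * Real.exp (-y ^ 2))) := by ring
  rw [h1, ← Real.exp_add]
  rw [show ((-1 : ℝ) ^ m) ^ 2 = 1 by rw [← pow_mul, mul_comm, pow_mul]; simp]
  simp

lemma hermiteFun_eq (m : ℕ) (y : ℝ) :
    hermiteFun m y = cc m * (Pm m).eval y * Real.exp (-y ^ 2 / 2) := by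
  rw [hermiteFun, hermiteH_eq, cc]

lemma pos_const (m : ℕ) : 0 < (2 : ℝ) ^ m * m.factorial * Real.sqrt Real.pi := by
  have : (0:ℝ) < Real.sqrt Real.pi := Real.sqrt_pos.2 Real.pi_pos
  positivity

lemma cc_ne_zero (m : ℕ) : cc m ≠ 0 :=
  inv_ne_zero (ne_of_gt (Real.sqrt_pos.2 (pos_const m)))

lemma cc_sq (m : ℕ) : cc m * cc m * (2 ^ m * m.factorial * Real.sqrt Real.pi) = 1 := by
  have h := pos_const m
  rw [cc, ← mul_inv, Real.mul_self_sqrt h.le]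
  exact inv_mul_cancel₀ (ne_of_gt h)

lemma hermiteFun_ortho (j k : ℕ) :
    ∫ x : ℝ, hermiteFun j x * hermiteFun k x = if j = k then 1 else 0 := by
  have hexp : ∀ x : ℝ, Real.exp (-x ^ 2 / 2) * Real.exp (-x ^ 2 / 2) = Real.exp (-x ^ 2) := by
    intro x
    rw [← Real.exp_add]
    ring_nf
  have hint : ∀ x : ℝ, hermiteFun j x * hermiteFun k x
      = cc j * cc k * ((Pm j).eval x * (Pm k).eval x * Real.exp (-x ^ 2)) := by
    intro x
    rw [hermiteFun_eq, hermiteFun_eq,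
      show cc j * (Pm j).eval x * Real.exp (-x ^ 2 / 2) * (cc k * (Pm k).eval x * Real.exp (-x ^ 2 / 2))
        = cc j * cc k * ((Pm j).eval x * (Pm k).eval x * (Real.exp (-x ^ 2 / 2) * Real.exp (-x ^ 2 / 2)))
        from by ring, hexp x]
  simp_rw [hint]
  rw [MeasureTheory.integral_const_mul, ortho]
  rcases eq_or_ne j k with rfl | hne
  · rw [if_pos rfl, if_pos rfl, ← mul_assoc, mul_assoc (cc j * cc j)]
    exact cc_sq j
  · rw [if_neg hne, if_neg hne, mul_zero]

def Bm (n : ℕ) : Matrix (Fin n) (Fin n) ℝ :=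
  Matrix.of fun j k : Fin n => cc j * (Pm j).coeff k

lemma hermiteFun_expand {n : ℕ} (j : Fin n) (s : ℝ) :
    hermiteFun j s = (∑ k : Fin n, Bm n j k * s ^ (k : ℕ)) * Real.exp (-s ^ 2 / 2) := by
  rw [hermiteFun_eq]
  have hd : (Pm (j : ℕ)).natDegree < n := lt_of_le_of_lt (natDegree_Pm_le _) j.isLt
  have hsum : ∑ k : Fin n, Bm n j k * s ^ (k : ℕ)
      = ∑ k ∈ Finset.range n, cc j * ((Pm (j : ℕ)).coeff k * s ^ k) := by
    rw [Finset.sum_range fun k => cc j * ((Pm (j : ℕ)).coeff k * s ^ k)]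
    refine Finset.sum_congr rfl fun k _ => ?_
    rw [Bm, Matrix.of_apply]
    ring
  rw [Polynomial.eval_eq_sum_range' hd, hsum, ← Finset.mul_sum]

lemma prod_expand {n : ℕ} (j k : Fin n) (s : ℝ) :
    hermiteFun j s * hermiteFun k s = ∑ a : Fin n, ∑ b : Fin n,
      Bm n j a * (Real.exp (-s ^ 2) * (s ^ (a : ℕ) * s ^ (b : ℕ))) * Bm n k b := by
  rw [hermiteFun_expand j s, hermiteFun_expand k s,
    show (∑ a : Fin n, Bm n j a * s ^ (a : ℕ)) * Real.exp (-s ^ 2 / 2) *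
        ((∑ b : Fin n, Bm n k b * s ^ (b : ℕ)) * Real.exp (-s ^ 2 / 2))
      = (∑ a : Fin n, Bm n j a * s ^ (a : ℕ)) * (∑ b : Fin n, Bm n k b * s ^ (b : ℕ)) *
        (Real.exp (-s ^ 2 / 2) * Real.exp (-s ^ 2 / 2)) from by ring,
    show Real.exp (-s ^ 2 / 2) * Real.exp (-s ^ 2 / 2) = Real.exp (-s ^ 2) from by
      rw [← Real.exp_add]; ring_nf,
    Finset.sum_mul_sum, Finset.sum_mul]
  refine Finset.sum_congr rfl fun a _ => ?_
  rw [Finset.sum_mul]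
  refine Finset.sum_congr rfl fun b _ => ?_
  ring

lemma integrable_term (a b : ℕ) :
    Integrable (fun s : ℝ => Real.exp (-s ^ 2) * (s ^ a * s ^ b)) := by
  have h : (fun s : ℝ => Real.exp (-s ^ 2) * (s ^ a * s ^ b))
      = fun s : ℝ => s ^ (a + b) * Real.exp (-s ^ 2) := by
    funext s
    rw [pow_add]
    ring
  rw [h]
  exact integrable_pow_gauss (a + b)

lemma swap_int {n : ℕ} (μ : MeasureTheory.Measure ℝ)
    (hμ : ∀ a b : ℕ, Integrable (fun s : ℝ => Real.exp (-s ^ 2) * (s ^ a * s ^ b)) μ)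
    (j k : Fin n) :
    (∫ s : ℝ, ∑ a : Fin n, ∑ b : Fin n,
        Bm n j a * (Real.exp (-s ^ 2) * (s ^ (a : ℕ) * s ^ (b : ℕ))) * Bm n k b ∂μ)
      = ∑ a : Fin n, ∑ b : Fin n,
          Bm n j a * (∫ s : ℝ, Real.exp (-s ^ 2) * (s ^ (a : ℕ) * s ^ (b : ℕ)) ∂μ) * Bm n k b := by
  have hInt : ∀ a : Fin n, ∀ b : Fin n,
      Integrable (fun s : ℝ => Bm n j a * (Real.exp (-s ^ 2) * (s ^ (a : ℕ) * s ^ (b : ℕ))) * Bm n k b) μ :=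
    fun a b => ((hμ a b).const_mul _).mul_const _
  have h1 : ∀ a ∈ Finset.univ (α := Fin n), Integrable (fun s : ℝ => ∑ b : Fin n,
      Bm n j a * (Real.exp (-s ^ 2) * (s ^ (a : ℕ) * s ^ (b : ℕ))) * Bm n k b) μ :=
    fun a _ => MeasureTheory.integrable_finset_sum _ fun b _ => hInt a b
  rw [MeasureTheory.integral_finset_sum _ h1]
  refine Finset.sum_congr rfl fun a _ => ?_
  rw [MeasureTheory.integral_finset_sum _ fun b _ => hInt a b]
  refine Finset.sum_congr rfl fun b _ => ?_
  rw [MeasureTheory.integral_mul_const, MeasureTheory.integral_const_mul]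

lemma entry_sum {n : ℕ} (M : Matrix (Fin n) (Fin n) ℝ) (j k : Fin n) :
    (Bm n * M * (Bm n)ᵀ) j k = ∑ a : Fin n, ∑ b : Fin n, Bm n j a * M a b * Bm n k b := by
  simp only [Matrix.mul_apply, Matrix.transpose_apply, Finset.sum_mul, Finset.mul_sum]
  rw [Finset.sum_comm]

lemma phiPlus_entry {n : ℕ} (t : ℝ) (j k : Fin n) :
    (∫ s in Set.Ioi t, hermiteFun j s * hermiteFun k s)
      = (Bm n * Mmat n t * (Bm n)ᵀ) j k := by
  simp_rw [prod_expand]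
  rw [swap_int _ (fun a b => (integrable_term a b).integrableOn), entry_sum]
  rfl

lemma MmatBot_entry {n : ℕ} (j k : Fin n) :
    (∫ s : ℝ, hermiteFun j s * hermiteFun k s)
      = (Bm n * MmatBot n * (Bm n)ᵀ) j k := by
  simp_rw [prod_expand]
  rw [swap_int _ (fun a b => integrable_term a b), entry_sum]
  rfl

lemma phiPlus_factor (n : ℕ) (t : ℝ) : phiPlus n t = Bm n * Mmat n t * (Bm n)ᵀ := by
  ext j k
  rw [phiPlus, Matrix.of_apply, phiPlus_entry]

lemma MmatBot_factor (n : ℕ) : Bm n * MmatBot n * (Bm n)ᵀ = 1 := by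
  ext j k
  rw [← MmatBot_entry, hermiteFun_ortho, Matrix.one_apply]
  simp [Fin.val_eq_val]


lemma Bm_diag {n : ℕ} (i : Fin n) : Bm n i i = cc i * 2 ^ (i : ℕ) := by
  rw [Bm, Matrix.of_apply, coeff_Pm_self]

lemma det_Bm_ne_zero (n : ℕ) : (Bm n).det ≠ 0 := by
  have htri : (Bm n).BlockTriangular OrderDual.toDual := by
    intro i j hij
    rw [Bm, Matrix.of_apply, coeff_Pm_of_lt (by exact_mod_cast hij : (i : ℕ) < (j : ℕ)), mul_zero]
  rw [Matrix.det_of_lowerTriangular (Bm n) htri]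
  refine Finset.prod_ne_zero_iff.2 fun i _ => ?_
  rw [Bm_diag]
  exact mul_ne_zero (cc_ne_zero i) (by positivity)

end S

open S in
/-- For every `t ∈ ℝ` and `λ ∈ ℂ`, `det(λI − φ⁺(t)) = 0` iff
`det(λ M_{−∞} − M_t) = 0`. -/
theorem phiPlus_charpoly_iff (n : ℕ) (hn : 1 ≤ n) (t : ℝ) (lam : ℂ) :
    (lam • (1 : Matrix (Fin n) (Fin n) ℂ) -
        (phiPlus n t).map (fun x : ℝ => (x : ℂ))).det = 0 ↔
      (lam • (MmatBot n).map (fun x : ℝ => (x : ℂ)) -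
        (Mmat n t).map (fun x : ℝ => (x : ℂ))).det = 0 := by
  have hfun : (fun x : ℝ => (x : ℂ)) = ⇑Complex.ofRealHom := rfl
  set f : ℝ →+* ℂ := Complex.ofRealHom with hf
  rw [hfun]
  set A : Matrix (Fin n) (Fin n) ℂ := (Bm n).map f with hA
  have h1 : (phiPlus n t).map f = A * (Mmat n t).map f * Aᵀ := by
    rw [phiPlus_factor, Matrix.map_mul, Matrix.map_mul, Matrix.transpose_map]
  have h2 : A * (MmatBot n).map f * Aᵀ = 1 := by
    have := congrArg (fun M : Matrix (Fin n) (Fin n) ℝ => M.map f) (MmatBot_factor n)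
    simpa [Matrix.map_mul, Matrix.transpose_map, Matrix.map_one] using this
  have key : lam • (1 : Matrix (Fin n) (Fin n) ℂ) - (phiPlus n t).map f
      = A * (lam • (MmatBot n).map f - (Mmat n t).map f) * Aᵀ := by
    rw [Matrix.mul_sub, Matrix.sub_mul, h1, Matrix.mul_smul, Matrix.smul_mul, h2]
  have hdetA : A.det ≠ 0 := by
    have h3 : A.det = ((Bm n).det : ℂ) := by
      rw [hA, show (Bm n).map ⇑f = f.mapMatrix (Bm n) from rfl, ← RingHom.map_det]
      rfl
    rw [h3]
    exact_mod_cast det_Bm_ne_zero n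
  rw [key, Matrix.det_mul, Matrix.det_mul, Matrix.det_transpose]
  simp [mul_eq_zero, hdetA]
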